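/- If Z ∈ {0,1}^N is exchangeable, then for any A ⊆ [N] with |A| = n, E[∏_{j∈A}(1 - Z[j]/p)] = E[Q_n(‖Z‖; N, p)], where Q_n are the Krawtchouk polynomials. -/

import Mathlib

open Finset

-- coefficient extraction from a polynomial identity holding for all reals
lemma coeff_ext {m : ℕ} {a b : ℕ → ℝ}
    (h : ∀ s : ℝ, ∑ k ∈ range m, a k * s ^ k = ∑ k ∈ range m, b k * s ^ k) :
    ∀ k ∈ range m, a k = b k := by
  have hpq : (∑ k ∈ range m, Polynomial.C (a k) * Polynomial.X ^ k)
      = ∑ k ∈ range m, Polynomial.C (b k) * Polynomial.X ^ k := by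
    apply Polynomial.funext
    intro s
    simp only [Polynomial.eval_finset_sum, Polynomial.eval_mul, Polynomial.eval_C,
      Polynomial.eval_pow, Polynomial.eval_X]
    exact h s
  intro k hk
  have := congrArg (fun q => Polynomial.coeff q k) hpq
  simpa [Polynomial.finset_sum_coeff, Polynomial.coeff_C_mul, Polynomial.coeff_X_pow,
    Finset.sum_ite_eq' (range m), hk] using this

lemma key (N : ℕ) (c : ℝ) (q : ℕ → ℝ) (S : Finset (Fin N)) (n : ℕ) (hn : n ≤ N)
    (hQ : ∀ s : ℝ, ∑ k ∈ range (N+1), (N.choose k : ℝ) * q k * s ^ k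
        = (1 + c * s) ^ S.card * (1 + s) ^ (N - S.card)) :
    ∑ B ∈ powersetCard n (univ : Finset (Fin N)), c ^ (B ∩ S).card
      = (N.choose n : ℝ) * q n := by
  classical
  have hgen : ∀ s : ℝ,
      ∑ k ∈ range (N+1),
          (∑ B ∈ powersetCard k (univ : Finset (Fin N)), c ^ (B ∩ S).card) * s ^ k
        = ∑ k ∈ range (N+1), (N.choose k : ℝ) * q k * s ^ k := by
    intro s
    rw [hQ s]
    have expand : (∏ j : Fin N, ((if j ∈ S then c else 1) * s + 1))
        = ∑ B ∈ powerset (univ : Finset (Fin N)),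
            (∏ j ∈ B, ((if j ∈ S then c else 1) * s)) * 1 := by
      simpa using
        Finset.prod_add (fun j : Fin N => (if j ∈ S then c else 1) * s) (fun _ => (1:ℝ)) univ
    have lhs_eq : (∏ j : Fin N, ((if j ∈ S then c else 1) * s + 1))
        = (1 + c * s) ^ S.card * (1 + s) ^ (N - S.card) := by
      have : (∏ j : Fin N, ((if j ∈ S then c else 1) * s + 1))
          = ∏ j : Fin N, (if j ∈ S then 1 + c * s else 1 + s) := by
        apply Finset.prod_congr rfl
        intro j _
        split <;> ring
      rw [this, Finset.prod_ite (fun _ => 1 + c * s) (fun _ => 1 + s),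
        Finset.prod_const, Finset.prod_const]
      congr 1
      · congr 1
        simp
      · congr 1
        have : (univ.filter fun j : Fin N => ¬ j ∈ S) = Sᶜ := by
          ext j; simp
        rw [this, Finset.card_compl]
        simp
    have term_eq : ∀ B ∈ powerset (univ : Finset (Fin N)),
        (∏ j ∈ B, ((if j ∈ S then c else 1) * s)) * 1
          = c ^ (B ∩ S).card * s ^ B.card := by
      intro B _
      rw [mul_one, Finset.prod_mul_distrib, Finset.prod_const]
      congr 2
      rw [Finset.prod_ite (fun _ => c) (fun _ => (1:ℝ)), Finset.prod_const,
        Finset.prod_const, one_pow, mul_one, Finset.filter_mem_eq_inter]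
    rw [← lhs_eq, expand, Finset.sum_congr rfl term_eq, Finset.sum_powerset]
    have : (univ : Finset (Fin N)).card = N := by simp
    rw [this]
    apply Finset.sum_congr rfl
    intro k _
    rw [Finset.sum_mul]
    apply Finset.sum_congr rfl
    intro B hB
    rw [(Finset.mem_powersetCard.mp hB).2]
  exact coeff_ext hgen n (by simpa using Nat.lt_succ_of_le hn)

lemma invar (N : ℕ) (c : ℝ) (f : (Fin N → Bool) → ℝ)
    (hexch : ∀ z w : Fin N → Bool,
      (Finset.univ.filter (fun j => z j = true)).card
        = (Finset.univ.filter (fun j => w j = true)).card → f z = f w)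
    (A B : Finset (Fin N)) (hAB : B.card = A.card) :
    ∑ z : Fin N → Bool, f z * c ^ (A ∩ (univ.filter fun j => z j = true)).card
      = ∑ z : Fin N → Bool, f z * c ^ (B ∩ (univ.filter fun j => z j = true)).card := by
  classical
  -- permutation mapping B onto A
  have h1 : Fintype.card {j : Fin N // j ∈ B} = Fintype.card {j : Fin N // j ∈ A} := by
    simp [Fintype.card_coe, hAB]
  have h2 : Fintype.card {j : Fin N // ¬ j ∈ B} = Fintype.card {j : Fin N // ¬ j ∈ A} := by
    rw [Fintype.card_subtype_compl, Fintype.card_subtype_compl, h1]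
  let e1 := Fintype.equivOfCardEq h1
  let e2 := Fintype.equivOfCardEq h2
  let π : Equiv.Perm (Fin N) := Equiv.subtypeCongr e1 e2
  have hmem : ∀ j : Fin N, π j ∈ A ↔ j ∈ B := by
    intro j
    by_cases h : j ∈ B
    · have : π j = (e1 ⟨j, h⟩ : Fin N) := by
        simp [π, Equiv.subtypeCongr, h]
      rw [this]
      exact iff_of_true (e1 ⟨j, h⟩).2 h
    · have : π j = (e2 ⟨j, h⟩ : Fin N) := by
        simp [π, Equiv.subtypeCongr, h]
      rw [this]
      exact iff_of_false (e2 ⟨j, h⟩).2 h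
  have hbij : Function.Bijective (fun z : Fin N → Bool => z ∘ π) :=
    (Equiv.arrowCongr π.symm (Equiv.refl Bool)).bijective
  refine Fintype.sum_bijective _ hbij _ _ ?_
  intro z
  have hcard1 : (univ.filter fun j => (z ∘ π) j = true).card
      = (univ.filter fun j => z j = true).card := by
    apply Finset.card_bij (fun j _ => π j)
    · intro j hj; simp only [mem_filter, mem_univ, true_and] at hj ⊢; exact hj
    · intro a _ b _ hab; exact π.injective hab
    · intro k hk
      refine ⟨π.symm k, ?_, by simp⟩
      simp only [mem_filter, mem_univ, true_and, Function.comp] at hk ⊢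
      simpa using hk
  have hcard2 : (A ∩ (univ.filter fun j => z j = true)).card
      = (B ∩ (univ.filter fun j => (z ∘ π) j = true)).card := by
    apply Finset.card_bij (fun k _ => π.symm k)
    · intro k hk
      simp only [mem_inter, mem_filter, mem_univ, true_and, Function.comp] at hk ⊢
      refine ⟨?_, by simpa using hk.2⟩
      rw [← hmem]
      simpa using hk.1
    · intro a _ b _ hab; exact π.symm.injective hab
    · intro j hj
      refine ⟨π j, ?_, by simp⟩
      simp only [mem_inter, mem_filter, mem_univ, true_and, Function.comp] at hj ⊢
      exact ⟨(hmem j).mpr hj.1, hj.2⟩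
  have hfz : f z = f (z ∘ π) := hexch _ _ hcard1.symm
  rw [hfz, hcard2]

theorem stmt_8 (N : ℕ) (p : ℝ) (hp : 0 < p) (hp1 : p < 1)
    (Q : ℕ → ℕ → ℝ)
    (hQ : ∀ x ≤ N, ∀ s : ℝ,
      ∑ n ∈ Finset.range (N + 1), (N.choose n : ℝ) * Q n x * s ^ n
        = (1 - ((1 - p) / p) * s) ^ x * (1 + s) ^ (N - x))
    (f : (Fin N → Bool) → ℝ) (hf0 : ∀ z, 0 ≤ f z) (hf1 : ∑ z, f z = 1)
    (hexch : ∀ z w : Fin N → Bool,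
      (Finset.univ.filter (fun j => z j = true)).card
        = (Finset.univ.filter (fun j => w j = true)).card → f z = f w)
    (A : Finset (Fin N)) (n : ℕ) (hn : A.card = n) :
    ∑ z : Fin N → Bool, f z * ∏ j ∈ A, (1 - (if z j then (1 : ℝ) else 0) / p)
      = ∑ z : Fin N → Bool,
          f z * Q n ((Finset.univ.filter (fun j => z j = true)).card) := by
  classical
  set c : ℝ := 1 - 1 / p with hc
  have hp0 : p ≠ 0 := ne_of_gt hp
  have hQ' : ∀ x ≤ N, ∀ s : ℝ,
      ∑ k ∈ Finset.range (N + 1), (N.choose k : ℝ) * Q k x * s ^ k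
        = (1 + c * s) ^ x * (1 + s) ^ (N - x) := by
    intro x hx s
    rw [hQ x hx s]
    have hkey : (1:ℝ) - 1 / p = -((1 - p) / p) := by field_simp; ring
    congr 2
    rw [hc, hkey]
    ring
  have hnN : n ≤ N := by
    rw [← hn]
    simpa using Finset.card_le_univ A
  -- rewrite LHS
  have lhs_eq : ∀ z : Fin N → Bool,
      (∏ j ∈ A, (1 - (if z j then (1:ℝ) else 0) / p))
        = c ^ (A ∩ (univ.filter fun j => z j = true)).card := by
    intro z
    have : (∏ j ∈ A, (1 - (if z j then (1:ℝ) else 0) / p))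
        = ∏ j ∈ A, (if z j = true then c else 1) := by
      apply Finset.prod_congr rfl
      intro j _
      by_cases h : z j <;> simp [h, hc]
    rw [this, Finset.prod_ite (fun _ => c) (fun _ => (1:ℝ)), Finset.prod_const,
      Finset.prod_const, one_pow, mul_one]
    congr 2
    ext j
    simp
  have hC : ((N.choose n : ℝ)) ≠ 0 := by
    exact_mod_cast (Nat.choose_pos hnN).ne'
  apply mul_left_cancel₀ hC
  calc (N.choose n : ℝ) * ∑ z : Fin N → Bool,
          f z * ∏ j ∈ A, (1 - (if z j then (1:ℝ) else 0) / p)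
      = ∑ B ∈ powersetCard n (univ : Finset (Fin N)),
          ∑ z : Fin N → Bool, f z * c ^ (B ∩ (univ.filter fun j => z j = true)).card := by
        rw [Finset.sum_congr rfl (fun B hB => (invar N c f hexch A B
          (by rw [(Finset.mem_powersetCard.mp hB).2, hn])).symm)]
        rw [Finset.sum_const, Finset.card_powersetCard, nsmul_eq_mul]
        simp only [Finset.card_univ, Fintype.card_fin]
        congr 1
        apply Finset.sum_congr rfl
        intro z _
        rw [lhs_eq z]
    _ = ∑ z : Fin N → Bool, f z *
          ∑ B ∈ powersetCard n (univ : Finset (Fin N)),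
            c ^ (B ∩ (univ.filter fun j => z j = true)).card := by
        rw [Finset.sum_comm]
        apply Finset.sum_congr rfl
        intro z _
        rw [Finset.mul_sum]
    _ = (N.choose n : ℝ) * ∑ z : Fin N → Bool,
          f z * Q n ((Finset.univ.filter (fun j => z j = true)).card) := by
        rw [Finset.mul_sum]
        apply Finset.sum_congr rfl
        intro z _
        have hS : ((univ.filter fun j : Fin N => z j = true)).card ≤ N := by
          simpa using Finset.card_le_univ (univ.filter fun j : Fin N => z j = true)
        rw [key N c (fun k => Q k ((univ.filter fun j : Fin N => z j = true)).card)
          (univ.filter fun j => z j = true) n hnN (hQ' _ hS)]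
        ring
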